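/- If the sectional K-curvature is constant equal to A and e_1 is a unit vector where Φ(X)=C(X,X,X) attains a local maximum with value λ_1, then every eigenvalue λ' of K_{e_1} on the orthogonal complement of e_1 satisfies λ'² - λ_1λ' + A = 0 and 2λ' ≤ λ_1, hence λ' = (λ_1 - √(λ_1² - 4A))/2. -/

import Mathlib

open RealInnerProductSpace Filter

lemma aux_expand {V : Type*} [NormedAddCommGroup V] [InnerProductSpace ℝ V]
    (K : V →ₗ[ℝ] V →ₗ[ℝ] V)
    (hsymm : ∀ X Y : V, K X Y = K Y X)
    (hadj : ∀ X Y Z : V, ⟪K X Y, Z⟫ = ⟪Y, K X Z⟫)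
    (e₁ W : V) (p q : ℝ) :
    ⟪p • e₁ + q • W, K (p • e₁ + q • W) (p • e₁ + q • W)⟫
      = p^3 * ⟪e₁, K e₁ e₁⟫ + 3*p^2*q*⟪W, K e₁ e₁⟫
        + 3*p*q^2*⟪W, K e₁ W⟫ + q^3*⟪W, K W W⟫ := by
  have h1 : ⟪e₁, K e₁ W⟫ = ⟪W, K e₁ e₁⟫ := by
    rw [← hadj e₁ e₁ W, real_inner_comm]
  have h2 : ⟪e₁, K W W⟫ = ⟪W, K e₁ W⟫ := by
    rw [← hadj W e₁ W, hsymm W e₁, real_inner_comm]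
  simp only [map_add, map_smul, LinearMap.add_apply, LinearMap.smul_apply,
    inner_add_left, inner_add_right, real_inner_smul_left, real_inner_smul_right,
    smul_smul]
  rw [hsymm W e₁]
  rw [h1, h2]
  ring

lemma aux_key {V : Type*} [NormedAddCommGroup V] [InnerProductSpace ℝ V]
    (K : V →ₗ[ℝ] V →ₗ[ℝ] V)
    (hsymm : ∀ X Y : V, K X Y = K Y X)
    (hadj : ∀ X Y Z : V, ⟪K X Y, Z⟫ = ⟪Y, K X Z⟫)
    (e₁ : V) (he₁ : ‖e₁‖ = 1)
    (hmax : IsLocalMaxOn (fun X : V => ⟪X, K X X⟫) {X : V | ‖X‖ = 1} e₁)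
    (l₁ : ℝ) (hl₁ : ⟪e₁, K e₁ e₁⟫ = l₁)
    (W : V) (hW : ‖W‖ = 1) (hWe : ⟪W, e₁⟫ = 0) :
    ⟪W, K e₁ e₁⟫ = 0 ∧ 2 * ⟪W, K e₁ W⟫ ≤ l₁ := by
  have hee : ⟪e₁, e₁⟫ = (1:ℝ) := by
    rw [real_inner_self_eq_norm_sq, he₁]; norm_num
  have hWW : ⟪W, W⟫ = (1:ℝ) := by
    rw [real_inner_self_eq_norm_sq, hW]; norm_num
  have heW : ⟪e₁, W⟫ = (0:ℝ) := by rw [real_inner_comm]; exact hWe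
  set b := ⟪W, K e₁ e₁⟫ with hb_def
  set c := ⟪W, K e₁ W⟫ with hc_def
  set d := ⟪W, K W W⟫ with hd_def
  set γ : ℝ → V := fun t => Real.cos t • e₁ + Real.sin t • W with hγ_def
  set g : ℝ → ℝ := fun t =>
    l₁ * (Real.cos t)^3 + ((3*b) * ((Real.cos t)^2 * Real.sin t)
      + ((3*c) * (Real.cos t * (Real.sin t)^2) + d * (Real.sin t)^3)) with hg_def
  have hγ0 : γ 0 = e₁ := by simp [hγ_def]
  have hγs : ∀ t, ‖γ t‖ = 1 := by
    intro t
    rw [norm_eq_sqrt_real_inner]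
    have : ⟪γ t, γ t⟫ = (1:ℝ) := by
      simp only [hγ_def, inner_add_left, inner_add_right, real_inner_smul_left,
        real_inner_smul_right, hee, hWW, heW, hWe]
      nlinarith [Real.sin_sq_add_cos_sq t]
    rw [this, Real.sqrt_one]
  have hγg : ∀ t, ⟪γ t, K (γ t) (γ t)⟫ = g t := by
    intro t
    rw [hγ_def]
    simp only []
    rw [aux_expand K hsymm hadj e₁ W, hl₁]
    simp only [hg_def]
    ring
  have hcont : Continuous γ := by
    apply Continuous.add
    · exact Real.continuous_cos.smul continuous_const
    · exact Real.continuous_sin.smul continuous_const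
  have htend : Tendsto γ (nhds 0) (nhdsWithin e₁ {X : V | ‖X‖ = 1}) := by
    rw [tendsto_nhdsWithin_iff]
    constructor
    · have := hcont.tendsto 0
      rwa [hγ0] at this
    · exact Filter.Eventually.of_forall (fun t => hγs t)
  have hgmax : IsLocalMax g 0 := by
    have h1 : ∀ᶠ t in nhds (0:ℝ), ⟪γ t, K (γ t) (γ t)⟫ ≤ ⟪e₁, K e₁ e₁⟫ :=
      htend.eventually hmax
    have hg0 : g 0 = l₁ := by simp [hg_def]
    filter_upwards [h1] with t ht
    rw [hγg t] at ht
    rw [hg0, ← hl₁]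
    exact ht
  -- first derivative
  have hc0 := Real.hasDerivAt_cos 0
  have hs0 := Real.hasDerivAt_sin 0
  have hd1 : HasDerivAt g (3*b) 0 := by
    have t1 := (hc0.pow 3).const_mul l₁
    have t2 := (((hc0.pow 2).mul hs0).const_mul (3*b))
    have t3 := ((hc0.mul (hs0.pow 2)).const_mul (3*c))
    have t4 := ((hs0.pow 3).const_mul d)
    have H := t1.add (t2.add (t3.add t4))
    convert H using 1
    · rfl
    · rfl
    · rfl
    · simp [Real.sin_zero, Real.cos_zero]
  have hb0 : b = 0 := by
    have h := hgmax.deriv_eq_zero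
    rw [hd1.deriv] at h
    linarith
  refine ⟨hb0, ?_⟩
  -- second derivative via limits
  have hslope : Tendsto (fun t => Real.sin t / t) (nhdsWithin 0 {(0:ℝ)}ᶜ) (nhds 1) := by
    have h := (Real.hasDerivAt_sin 0)
    rw [hasDerivAt_iff_tendsto_slope] at h
    rw [Real.cos_zero] at h
    refine h.congr' ?_
    filter_upwards [self_mem_nhdsWithin] with t ht
    simp [slope_def_field]
  have hhalf : Tendsto (fun t : ℝ => t/2) (nhdsWithin 0 {(0:ℝ)}ᶜ) (nhdsWithin 0 {(0:ℝ)}ᶜ) := by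
    rw [tendsto_nhdsWithin_iff]
    constructor
    · have : Tendsto (fun t : ℝ => t/2) (nhds 0) (nhds ((0:ℝ)/2)) :=
        (continuous_id.div_const 2).tendsto 0
      simp only [zero_div] at this
      exact this.mono_left nhdsWithin_le_nhds
    · filter_upwards [self_mem_nhdsWithin] with t ht
      exact div_ne_zero ht two_ne_zero
  have hv : Tendsto (fun t => Real.sin (t/2)/(t/2)) (nhdsWithin 0 {(0:ℝ)}ᶜ) (nhds 1) :=
    hslope.comp hhalf
  have hcos1 : Tendsto Real.cos (nhdsWithin 0 {(0:ℝ)}ᶜ) (nhds 1) := by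
    have := Real.continuous_cos.tendsto 0
    rw [Real.cos_zero] at this
    exact this.mono_left nhdsWithin_le_nhds
  have hsin0 : Tendsto Real.sin (nhdsWithin 0 {(0:ℝ)}ᶜ) (nhds 0) := by
    have := Real.continuous_sin.tendsto 0
    rw [Real.sin_zero] at this
    exact this.mono_left nhdsWithin_le_nhds
  have hRHS : Tendsto (fun t =>
      l₁ * (1 + Real.cos t + (Real.cos t)^2) * ((Real.sin (t/2)/(t/2))^2/2)
        - (3*c) * (Real.cos t * (Real.sin t/t)^2)
        - d * (Real.sin t * (Real.sin t/t)^2))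
      (nhdsWithin 0 {(0:ℝ)}ᶜ)
      (nhds (l₁ * (1 + 1 + 1^2) * (1^2/2) - (3*c) * (1 * 1^2) - d * (0 * 1^2))) := by
    apply Tendsto.sub
    apply Tendsto.sub
    · exact (tendsto_const_nhds.mul ((tendsto_const_nhds.add hcos1).add (hcos1.pow 2))).mul
        ((hv.pow 2).div_const 2)
    · exact tendsto_const_nhds.mul (hcos1.mul (hslope.pow 2))
    · exact tendsto_const_nhds.mul (hsin0.mul (hslope.pow 2))
  have heq : ∀ᶠ t in nhdsWithin (0:ℝ) {(0:ℝ)}ᶜ,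
      (g 0 - g t)/t^2 =
      l₁ * (1 + Real.cos t + (Real.cos t)^2) * ((Real.sin (t/2)/(t/2))^2/2)
        - (3*c) * (Real.cos t * (Real.sin t/t)^2)
        - d * (Real.sin t * (Real.sin t/t)^2) := by
    filter_upwards [self_mem_nhdsWithin] with t ht
    have ht' : (t:ℝ) ≠ 0 := ht
    have hct : Real.cos t = 1 - 2 * Real.sin (t/2)^2 := by
      have h1 : Real.cos (2*(t/2)) = 1 - 2 * Real.sin (t/2)^2 := by
        rw [Real.cos_two_mul]
        nlinarith [Real.sin_sq_add_cos_sq (t/2)]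
      rw [← h1]; ring_nf
    have hg0 : g 0 = l₁ := by simp [hg_def]
    rw [hg0]
    simp only [hg_def, hb0]
    rw [hct]
    field_simp
    ring
  have hH : Tendsto (fun t => (g 0 - g t)/t^2) (nhdsWithin 0 {(0:ℝ)}ᶜ)
      (nhds (l₁ * (1 + 1 + 1^2) * (1^2/2) - (3*c) * (1 * 1^2) - d * (0 * 1^2))) :=
    hRHS.congr' (heq.mono fun t ht => ht.symm)
  have hge : ∀ᶠ t in nhdsWithin (0:ℝ) {(0:ℝ)}ᶜ, 0 ≤ (g 0 - g t)/t^2 := by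
    have h1 : ∀ᶠ t in nhdsWithin (0:ℝ) {(0:ℝ)}ᶜ, g t ≤ g 0 :=
      hgmax.filter_mono nhdsWithin_le_nhds
    filter_upwards [h1, self_mem_nhdsWithin] with t ht hne
    have ht0 : t ≠ 0 := hne
    have : (0:ℝ) < t^2 := by positivity
    apply div_nonneg (by linarith) (le_of_lt this)
  have hfin : 0 ≤ l₁ * (1 + 1 + 1^2) * (1^2/2) - (3*c) * (1 * 1^2) - d * (0 * 1^2) :=
    ge_of_tendsto hH hge
  norm_num at hfin
  linarith

/-- If the sectional K-curvature is a constant `A` and `Φ(X) = C(X,X,X)` attains a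
local maximum `λ₁` at a unit vector `e₁`, then every eigenvalue `λ'` of `K_{e₁}` on
the orthogonal complement of `e₁` satisfies `λ'² - λ₁ λ' + A = 0` and `2λ' ≤ λ₁`,
hence `λ' = (λ₁ - √(λ₁² - 4A))/2`. -/
theorem eigenvalues_at_local_max
    {V : Type*} [NormedAddCommGroup V] [InnerProductSpace ℝ V]
    [FiniteDimensional ℝ V] (hdim : 2 ≤ Module.finrank ℝ V)
    (K : V →ₗ[ℝ] V →ₗ[ℝ] V)
    (hsymm : ∀ X Y : V, K X Y = K Y X)
    (hadj : ∀ X Y Z : V, ⟪K X Y, Z⟫ = ⟪Y, K X Z⟫)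
    (A : ℝ)
    (hconst : ∀ X Y Z W : V,
      ⟪K X W, K Y Z⟫ - ⟪K Y W, K X Z⟫
        = A * (⟪X, W⟫ * ⟪Y, Z⟫ - ⟪Y, W⟫ * ⟪X, Z⟫))
    (e₁ : V) (he₁ : ‖e₁‖ = 1)
    (hmax : IsLocalMaxOn (fun X : V => ⟪X, K X X⟫) {X : V | ‖X‖ = 1} e₁)
    (l₁ : ℝ) (hl₁ : ⟪e₁, K e₁ e₁⟫ = l₁) :
    ∀ (l' : ℝ) (X : V), ‖X‖ = 1 → ⟪X, e₁⟫ = 0 → K e₁ X = l' • X →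
      l' ^ 2 - l₁ * l' + A = 0 ∧ 2 * l' ≤ l₁ ∧
        l' = (l₁ - Real.sqrt (l₁ ^ 2 - 4 * A)) / 2 := by
  intro l' X hX hXe hEig
  have hee : ⟪e₁, e₁⟫ = (1:ℝ) := by
    rw [real_inner_self_eq_norm_sq, he₁]; norm_num
  have hXX : ⟪X, X⟫ = (1:ℝ) := by
    rw [real_inner_self_eq_norm_sq, hX]; norm_num
  have heX : ⟪e₁, X⟫ = (0:ℝ) := by rw [real_inner_comm]; exact hXe
  -- K e₁ e₁ = l₁ • e₁
  have hK11 : K e₁ e₁ = l₁ • e₁ := by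
    set v := K e₁ e₁ - l₁ • e₁ with hv_def
    have hv1 : ⟪v, e₁⟫ = 0 := by
      rw [hv_def, inner_sub_left, real_inner_smul_left, hee,
        real_inner_comm, hl₁]
      ring
    rcases eq_or_ne v 0 with hv0 | hv0
    · have := sub_eq_zero.mp hv0
      exact this
    · exfalso
      set W : V := (‖v‖:ℝ)⁻¹ • v with hW_def
      have hWn : ‖W‖ = 1 := by
        rw [hW_def, norm_smul]
        simp [norm_ne_zero_iff.mpr hv0]
      have hWe : ⟪W, e₁⟫ = 0 := by
        rw [hW_def, real_inner_smul_left, hv1, mul_zero]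
      have hkey := (aux_key K hsymm hadj e₁ he₁ hmax l₁ hl₁ W hWn hWe).1
      rw [hW_def, real_inner_smul_left] at hkey
      have hne : (‖v‖:ℝ)⁻¹ ≠ 0 := inv_ne_zero (norm_ne_zero_iff.mpr hv0)
      have h2 : ⟪v, K e₁ e₁⟫ = 0 := by
        rcases mul_eq_zero.mp hkey with h | h
        · exact absurd h hne
        · exact h
      have h3 : ⟪v, v⟫ = 0 := by
        rw [hv_def] at h2 hv1 ⊢
        simp only [inner_sub_left, inner_sub_right, real_inner_smul_left,
          real_inner_smul_right] at h2 hv1 ⊢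
        linear_combination h2 - l₁ * hv1
      exact hv0 (inner_self_eq_zero.mp h3)
  -- eigenvalue relations
  have hXK : ⟪X, K e₁ X⟫ = l' := by
    rw [hEig, real_inner_smul_right, hXX, mul_one]
  have heKXX : ⟪e₁, K X X⟫ = l' := by
    rw [← hadj X e₁ X, hsymm X e₁, hEig, real_inner_smul_left, hXX, mul_one]
  have eq1 : l' ^ 2 - l₁ * l' + A = 0 := by
    have h := hconst e₁ X X e₁
    rw [hee, hXX, hXe, heX] at h
    rw [hK11, real_inner_smul_left, heKXX] at h
    rw [hsymm X e₁, hEig, real_inner_smul_left, real_inner_smul_right, hXX] at h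
    nlinarith [h]
  have le1 : 2 * l' ≤ l₁ := by
    have h := (aux_key K hsymm hadj e₁ he₁ hmax l₁ hl₁ X hX hXe).2
    rw [hXK] at h
    exact h
  refine ⟨eq1, le1, ?_⟩
  have hdisc : l₁ ^ 2 - 4 * A = (l₁ - 2 * l') ^ 2 := by nlinarith [eq1]
  rw [hdisc, Real.sqrt_sq (by linarith : 0 ≤ l₁ - 2 * l')]
  ring
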